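/- Vaughan's identity: for any real u ≥ 1 and any integer n > u, Λ(n) = Σ_{jk=n, j>u, k>u} Λ(k) a_j + Σ_{jk=n, j≤u} μ(j) log(k) − Σ_{jk=n, j≤u²} b_j, where a_j = Σ_{dℓ=j, d>u} μ(d) and b_j = Σ_{dℓ=j, d≤u, ℓ≤u} μ(d)Λ(ℓ). -/

import Mathlib

open ArithmeticFunction Finset
open scoped ArithmeticFunction.Moebius ArithmeticFunction.zeta

private lemma assoc_DA {M : Type*} [AddCommMonoid M] (n : ℕ) (f : ℕ → ℕ → ℕ → M) :
    ∑ p ∈ n.divisorsAntidiagonal, ∑ q ∈ p.1.divisorsAntidiagonal, f q.1 q.2 p.2 =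
    ∑ p ∈ n.divisorsAntidiagonal, ∑ q ∈ p.2.divisorsAntidiagonal, f p.1 q.1 q.2 := by
  refine ((Finset.sum_sigma' _ _ (fun (p q : ℕ × ℕ) => f q.1 q.2 p.2)).trans ?_).trans
    (Finset.sum_sigma' _ _ (fun (p q : ℕ × ℕ) => f p.1 q.1 q.2)).symm
  refine Finset.sum_nbij' (fun x => ⟨(x.2.1, x.2.2 * x.1.2), (x.2.2, x.1.2)⟩)
    (fun x => ⟨(x.1.1 * x.2.1, x.2.2), (x.1.1, x.2.1)⟩) ?_ ?_ ?_ ?_ ?_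
  · rintro ⟨⟨p1, p2⟩, ⟨q1, q2⟩⟩ hx
    simp only [Finset.mem_sigma, Nat.mem_divisorsAntidiagonal] at hx ⊢
    obtain ⟨⟨h1, h2⟩, ⟨h3, h4⟩⟩ := hx
    constructor
    · exact ⟨by rw [← mul_assoc, h3, h1], h2⟩
    · refine ⟨trivial, ?_⟩
      intro h
      apply h2
      rw [← h1, ← h3, mul_assoc, h]
      ring
  · rintro ⟨⟨p1, p2⟩, ⟨q1, q2⟩⟩ hx
    simp only [Finset.mem_sigma, Nat.mem_divisorsAntidiagonal] at hx ⊢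
    obtain ⟨⟨h1, h2⟩, ⟨h3, h4⟩⟩ := hx
    constructor
    · exact ⟨by rw [mul_assoc, h3, h1], h2⟩
    · refine ⟨trivial, ?_⟩
      intro h
      apply h2
      rw [← h1, ← h3]
      rw [mul_eq_zero] at h
      rcases h with h | h <;> simp [h]
  · rintro ⟨⟨p1, p2⟩, ⟨q1, q2⟩⟩ hx
    simp only [Finset.mem_sigma, Nat.mem_divisorsAntidiagonal] at hx
    obtain ⟨⟨h1, h2⟩, ⟨h3, h4⟩⟩ := hx
    simp [h3]
  · rintro ⟨⟨p1, p2⟩, ⟨q1, q2⟩⟩ hx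
    simp only [Finset.mem_sigma, Nat.mem_divisorsAntidiagonal] at hx
    obtain ⟨⟨h1, h2⟩, ⟨h3, h4⟩⟩ := hx
    simp [h3]
  · rintro ⟨⟨p1, p2⟩, ⟨q1, q2⟩⟩ _
    rfl

private lemma swap_DA {M : Type*} [AddCommMonoid M] (m : ℕ) (g : ℕ → ℕ → M) :
    ∑ q ∈ m.divisorsAntidiagonal, g q.1 q.2 = ∑ q ∈ m.divisorsAntidiagonal, g q.2 q.1 := by
  rw [Nat.sum_divisorsAntidiagonal g]
  exact (Nat.sum_divisorsAntidiagonal' (fun a b => g b a)).symm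

private lemma moebius_sum_real (m : ℕ) :
    ∑ d ∈ m.divisors, (μ d : ℝ) = if m = 1 then 1 else 0 := by
  have h : ((μ * ζ : ArithmeticFunction ℤ)) m = ∑ d ∈ m.divisors, μ d :=
    coe_mul_zeta_apply
  rw [moebius_mul_coe_zeta, one_apply] at h
  have : ((∑ d ∈ m.divisors, μ d : ℤ) : ℝ) = ∑ d ∈ m.divisors, (μ d : ℝ) := by push_cast; rfl
  rw [← this, ← h]
  split_ifs <;> norm_num

private lemma vtot (n : ℕ) (hn2 : 2 ≤ n) :
    (Λ n : ℝ) = ∑ p ∈ n.divisorsAntidiagonal,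
      ∑ q ∈ p.2.divisorsAntidiagonal, (μ p.1 : ℝ) * Λ q.1 := by
  have h1 : ∀ p ∈ n.divisorsAntidiagonal,
      ∑ q ∈ p.2.divisorsAntidiagonal, (μ p.1 : ℝ) * Λ q.1
        = (μ p.1 : ℝ) * Real.log p.2 := by
    intro p hp
    rw [← Finset.mul_sum]
    congr 1
    rw [Nat.sum_divisorsAntidiagonal (fun a _ => (Λ a : ℝ))]
    exact vonMangoldt_sum
  rw [Finset.sum_congr rfl h1,
      Nat.sum_divisorsAntidiagonal (fun a b => (μ a : ℝ) * Real.log b)]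
  have hn0 : (n : ℝ) ≠ 0 := by positivity
  have key : ∀ d ∈ n.divisors,
      (μ d : ℝ) * Real.log ((n / d : ℕ) : ℝ)
        = (μ d : ℝ) * Real.log n - (μ d : ℝ) * Real.log d := by
    intro d hd
    rw [Nat.mem_divisors] at hd
    have hd0 : (d : ℝ) ≠ 0 := by
      have := Nat.pos_of_mem_divisors (Nat.mem_divisors.mpr hd)
      positivity
    rw [Nat.cast_div hd.1 hd0, Real.log_div hn0 hd0, mul_sub]
  have split : ∑ d ∈ n.divisors, (μ d : ℝ) * Real.log ((n / d : ℕ) : ℝ)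
      = (∑ d ∈ n.divisors, (μ d : ℝ)) * Real.log n
        - ∑ d ∈ n.divisors, (μ d : ℝ) * Real.log d := by
    rw [Finset.sum_mul, ← Finset.sum_sub_distrib]
    exact Finset.sum_congr rfl key
  have hmlog : ∑ d ∈ n.divisors, (μ d : ℝ) * Real.log d = -Λ n := by
    simpa only [ArithmeticFunction.log_apply] using sum_moebius_mul_log_eq (n := n)
  rw [split, moebius_sum_real, hmlog]
  have : n ≠ 1 := by omega
  rw [if_neg this]
  ring

private lemma aux1 (u : ℝ) (n : ℕ) (a : ℕ → ℝ)
    (ha : ∀ j, a j = ∑ d ∈ j.divisors, if u < (d : ℝ) then (μ d : ℝ) else 0) :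
    ∑ p ∈ n.divisorsAntidiagonal,
        (if u < (p.1 : ℝ) ∧ u < (p.2 : ℝ) then Λ p.2 * a p.1 else 0)
      = ∑ p ∈ n.divisorsAntidiagonal, ∑ q ∈ p.2.divisorsAntidiagonal,
        (if u < (p.1 : ℝ) ∧ u < (q.1 : ℝ) then (μ p.1 : ℝ) * Λ q.1 else 0) := by
  have step : ∀ p ∈ n.divisorsAntidiagonal,
      (if u < (p.1 : ℝ) ∧ u < (p.2 : ℝ) then Λ p.2 * a p.1 else 0)
        = ∑ q ∈ p.1.divisorsAntidiagonal,
          (if u < (q.1 : ℝ) ∧ u < (p.2 : ℝ) then (μ q.1 : ℝ) * Λ p.2 else 0) := by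
    intro p hp
    have hp1 : p.1 ≠ 0 := Nat.left_ne_zero_of_mem_divisorsAntidiagonal hp
    have hq1 : ∀ q ∈ p.1.divisorsAntidiagonal, (q.1 : ℝ) ≤ (p.1 : ℝ) := by
      intro q hq
      have h := (Nat.mem_divisorsAntidiagonal.mp hq).1
      have : q.1 ≤ p.1 := Nat.le_of_dvd (Nat.pos_of_ne_zero hp1) ⟨q.2, h.symm⟩
      exact_mod_cast this
    have haa : a p.1 = ∑ q ∈ p.1.divisorsAntidiagonal,
        (if u < (q.1 : ℝ) then (μ q.1 : ℝ) else 0) := by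
      rw [ha]
      exact (Nat.sum_divisorsAntidiagonal fun d _ => if u < (d : ℝ) then (μ d : ℝ) else 0).symm
    rw [haa, Finset.mul_sum]
    split_ifs with h
    · refine Finset.sum_congr rfl fun q hq' => ?_
      rw [mul_ite, mul_zero]
      split_ifs with h1 h2 h2
      · ring
      · exact absurd ⟨h1, h.2⟩ h2
      · exact absurd h2.1 h1
      · rfl
    · symm
      apply Finset.sum_eq_zero
      intro q hq'
      rw [if_neg]
      rintro ⟨h1, h2⟩
      exact h ⟨lt_of_lt_of_le h1 (hq1 q hq'), h2⟩
  refine (Finset.sum_congr rfl step).trans ?_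
  refine (assoc_DA n (fun d _ k => if u < (d : ℝ) ∧ u < (k : ℝ)
      then (μ d : ℝ) * Λ k else 0)).trans ?_
  exact Finset.sum_congr rfl fun p _ =>
    swap_DA p.2 (fun x y => if u < (p.1 : ℝ) ∧ u < (y : ℝ) then (μ p.1 : ℝ) * Λ y else 0)

private lemma aux2 (u : ℝ) (n : ℕ) :
    ∑ p ∈ n.divisorsAntidiagonal,
        (if (p.1 : ℝ) ≤ u then (μ p.1 : ℝ) * Real.log (p.2 : ℝ) else 0)
      = ∑ p ∈ n.divisorsAntidiagonal, ∑ q ∈ p.2.divisorsAntidiagonal,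
        (if (p.1 : ℝ) ≤ u then (μ p.1 : ℝ) * Λ q.1 else 0) := by
  refine Finset.sum_congr rfl fun p hp => ?_
  have hlog : Real.log (p.2 : ℝ) = ∑ q ∈ p.2.divisorsAntidiagonal, Λ q.1 := by
    rw [Nat.sum_divisorsAntidiagonal fun a _ => (Λ a : ℝ)]
    exact vonMangoldt_sum.symm
  split_ifs with h
  · rw [hlog, Finset.mul_sum]
  · symm
    apply Finset.sum_eq_zero
    intro q hq
    rfl

private lemma aux3 (u : ℝ) (hu : 1 ≤ u) (n : ℕ) (b : ℕ → ℝ)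
    (hb : ∀ j, b j = ∑ d ∈ j.divisors, if (d : ℝ) ≤ u ∧ ((j / d : ℕ) : ℝ) ≤ u then
      (μ d : ℝ) * Λ (j / d) else 0) :
    ∑ p ∈ n.divisorsAntidiagonal, (if (p.1 : ℝ) ≤ u ^ 2 then b p.1 else 0)
      = ∑ p ∈ n.divisorsAntidiagonal, ∑ q ∈ p.2.divisorsAntidiagonal,
        (if (p.1 : ℝ) ≤ u ∧ (q.1 : ℝ) ≤ u then (μ p.1 : ℝ) * Λ q.1 else 0) := by
  have step : ∀ p ∈ n.divisorsAntidiagonal,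
      (if (p.1 : ℝ) ≤ u ^ 2 then b p.1 else 0)
        = ∑ q ∈ p.1.divisorsAntidiagonal,
          (if (q.1 : ℝ) ≤ u ∧ (q.2 : ℝ) ≤ u then (μ q.1 : ℝ) * Λ q.2 else 0) := by
    intro p hp
    have hbb : b p.1 = ∑ q ∈ p.1.divisorsAntidiagonal,
        (if (q.1 : ℝ) ≤ u ∧ (q.2 : ℝ) ≤ u then (μ q.1 : ℝ) * Λ q.2 else 0) := by
      rw [hb]
      exact (Nat.sum_divisorsAntidiagonal fun d l =>
        if (d : ℝ) ≤ u ∧ (l : ℝ) ≤ u then (μ d : ℝ) * Λ l else 0).symm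
    split_ifs with h
    · exact hbb
    · symm
      apply Finset.sum_eq_zero
      intro q hq
      rw [if_neg]
      rintro ⟨h1, h2⟩
      apply h
      have hq' := (Nat.mem_divisorsAntidiagonal.mp hq).1
      have : (p.1 : ℝ) = (q.1 : ℝ) * (q.2 : ℝ) := by exact_mod_cast hq'.symm
      rw [this, pow_two]
      have h0 : (0 : ℝ) ≤ q.2 := Nat.cast_nonneg _
      exact mul_le_mul h1 h2 h0 (le_trans zero_le_one hu)
  refine (Finset.sum_congr rfl step).trans ?_
  exact assoc_DA n (fun d l _ => if (d : ℝ) ≤ u ∧ (l : ℝ) ≤ u then (μ d : ℝ) * Λ l else 0)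

private lemma aux0 (u : ℝ) (n : ℕ) (hn : u < n) :
    ∑ p ∈ n.divisorsAntidiagonal, ∑ q ∈ p.2.divisorsAntidiagonal,
        (if (q.1 : ℝ) ≤ u then (μ p.1 : ℝ) * Λ q.1 else 0) = 0 := by
  have h1 := (assoc_DA n (fun d l _ => if (l : ℝ) ≤ u then (μ d : ℝ) * Λ l else 0)).symm
  refine h1.trans ?_
  have h2 : ∀ p ∈ n.divisorsAntidiagonal,
      (∑ q ∈ p.1.divisorsAntidiagonal,
        (if (q.2 : ℝ) ≤ u then (μ q.1 : ℝ) * Λ q.2 else 0))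
      = ∑ q ∈ p.1.divisorsAntidiagonal,
        (if (q.1 : ℝ) ≤ u then (μ q.2 : ℝ) * Λ q.1 else 0) := fun p _ =>
    swap_DA p.1 (fun x y => if (y : ℝ) ≤ u then (μ x : ℝ) * Λ y else 0)
  refine (Finset.sum_congr rfl h2).trans ?_
  have h3 := assoc_DA n (fun d l _ => if (d : ℝ) ≤ u then (μ l : ℝ) * Λ d else 0)
  refine h3.trans ?_
  apply Finset.sum_eq_zero
  intro p hp
  obtain ⟨hp1, hn0⟩ := Nat.mem_divisorsAntidiagonal.mp hp
  have inner : ∀ q ∈ p.2.divisorsAntidiagonal,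
      (if (p.1 : ℝ) ≤ u then (μ q.1 : ℝ) * Λ p.1 else 0)
        = (μ q.1 : ℝ) * (if (p.1 : ℝ) ≤ u then Λ p.1 else 0) := by
    intro q hq
    split_ifs <;> simp
  rw [Finset.sum_congr rfl inner, ← Finset.sum_mul]
  have hsum : ∑ q ∈ p.2.divisorsAntidiagonal, (μ q.1 : ℝ)
      = if p.2 = 1 then 1 else 0 := by
    rw [Nat.sum_divisorsAntidiagonal fun d _ => (μ d : ℝ)]
    exact moebius_sum_real p.2
  rw [hsum]
  by_cases h : p.2 = 1
  · rw [if_pos h]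
    have : p.1 = n := by rw [← hp1, h, mul_one]
    rw [if_neg]
    · ring
    · rw [this]
      exact not_le.mpr hn
  · rw [if_neg h]
    ring

/-- Vaughan's identity: for `u ≥ 1` and `n > u`,
`Λ(n) = Σ_{jk=n, j>u, k>u} Λ(k) a_j + Σ_{jk=n, j≤u} μ(j) log k − Σ_{jk=n, j≤u²} b_j`,
where `a_j = Σ_{dℓ=j, d>u} μ(d)` and `b_j = Σ_{dℓ=j, d≤u, ℓ≤u} μ(d) Λ(ℓ)`. -/
theorem vaughan_identity
    (u : ℝ) (hu : 1 ≤ u) (n : ℕ) (hn : u < n)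
    (a b : ℕ → ℝ)
    (ha : ∀ j, a j = ∑ d ∈ j.divisors, if u < (d : ℝ) then (μ d : ℝ) else 0)
    (hb : ∀ j, b j = ∑ d ∈ j.divisors, if (d : ℝ) ≤ u ∧ ((j / d : ℕ) : ℝ) ≤ u then
      (μ d : ℝ) * Λ (j / d) else 0) :
    Λ n =
      (∑ j ∈ n.divisors, if u < (j : ℝ) ∧ u < ((n / j : ℕ) : ℝ) then Λ (n / j) * a j else 0)
      + (∑ j ∈ n.divisors, if (j : ℝ) ≤ u then (μ j : ℝ) * Real.log ((n / j : ℕ) : ℝ) else 0)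
      - (∑ j ∈ n.divisors, if (j : ℝ) ≤ u ^ 2 then b j else 0) := by
  have hn2 : 2 ≤ n := by
    have h1 : (1 : ℝ) < n := lt_of_le_of_lt hu hn
    exact_mod_cast Nat.one_lt_cast.mp h1
  -- convert the three divisor sums to divisorsAntidiagonal sums
  have e1 : ∑ p ∈ n.divisorsAntidiagonal,
      (if u < (p.1 : ℝ) ∧ u < (p.2 : ℝ) then Λ p.2 * a p.1 else 0)
      = ∑ j ∈ n.divisors, if u < (j : ℝ) ∧ u < ((n / j : ℕ) : ℝ) then Λ (n / j) * a j else 0 :=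
    Nat.sum_divisorsAntidiagonal fun j k => if u < (j : ℝ) ∧ u < (k : ℝ) then Λ k * a j else 0
  have e2 : ∑ p ∈ n.divisorsAntidiagonal,
      (if (p.1 : ℝ) ≤ u then (μ p.1 : ℝ) * Real.log (p.2 : ℝ) else 0)
      = ∑ j ∈ n.divisors, if (j : ℝ) ≤ u then (μ j : ℝ) * Real.log ((n / j : ℕ) : ℝ) else 0 :=
    Nat.sum_divisorsAntidiagonal fun j k =>
      if (j : ℝ) ≤ u then (μ j : ℝ) * Real.log (k : ℝ) else 0
  have e3 : ∑ p ∈ n.divisorsAntidiagonal, (if (p.1 : ℝ) ≤ u ^ 2 then b p.1 else 0)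
      = ∑ j ∈ n.divisors, if (j : ℝ) ≤ u ^ 2 then b j else 0 :=
    Nat.sum_divisorsAntidiagonal fun j _ => if (j : ℝ) ≤ u ^ 2 then b j else 0
  rw [← e1, ← e2, ← e3, aux1 u n a ha, aux2 u n, aux3 u hu n b hb]
  have pointwise : ∀ p ∈ n.divisorsAntidiagonal, ∀ q ∈ p.2.divisorsAntidiagonal,
      (μ p.1 : ℝ) * Λ q.1 =
        (if u < (p.1 : ℝ) ∧ u < (q.1 : ℝ) then (μ p.1 : ℝ) * Λ q.1 else 0)
        + (if (p.1 : ℝ) ≤ u then (μ p.1 : ℝ) * Λ q.1 else 0)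
        + (if (q.1 : ℝ) ≤ u then (μ p.1 : ℝ) * Λ q.1 else 0)
        - (if (p.1 : ℝ) ≤ u ∧ (q.1 : ℝ) ≤ u then (μ p.1 : ℝ) * Λ q.1 else 0) := by
    intro p _ q _
    rcases le_or_gt (p.1 : ℝ) u with hd | hd <;> rcases le_or_gt (q.1 : ℝ) u with hl | hl
    · rw [if_neg (by rintro ⟨h1, _⟩; linarith), if_pos hd, if_pos hl, if_pos ⟨hd, hl⟩]; ring
    · rw [if_neg (by rintro ⟨h1, _⟩; linarith), if_pos hd, if_neg (by linarith),
        if_neg (by rintro ⟨_, h2⟩; linarith)]; ring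
    · rw [if_neg (by rintro ⟨_, h2⟩; linarith), if_neg (by linarith), if_pos hl,
        if_neg (by rintro ⟨h1, _⟩; linarith)]; ring
    · rw [if_pos ⟨hd, hl⟩, if_neg (by linarith), if_neg (by linarith),
        if_neg (by rintro ⟨h1, _⟩; linarith)]; ring
  have expand : ∑ p ∈ n.divisorsAntidiagonal, ∑ q ∈ p.2.divisorsAntidiagonal,
      ((μ p.1 : ℝ) * Λ q.1)
      = (∑ p ∈ n.divisorsAntidiagonal, ∑ q ∈ p.2.divisorsAntidiagonal,
          (if u < (p.1 : ℝ) ∧ u < (q.1 : ℝ) then (μ p.1 : ℝ) * Λ q.1 else 0))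
        + (∑ p ∈ n.divisorsAntidiagonal, ∑ q ∈ p.2.divisorsAntidiagonal,
          (if (p.1 : ℝ) ≤ u then (μ p.1 : ℝ) * Λ q.1 else 0))
        + (∑ p ∈ n.divisorsAntidiagonal, ∑ q ∈ p.2.divisorsAntidiagonal,
          (if (q.1 : ℝ) ≤ u then (μ p.1 : ℝ) * Λ q.1 else 0))
        - (∑ p ∈ n.divisorsAntidiagonal, ∑ q ∈ p.2.divisorsAntidiagonal,
          (if (p.1 : ℝ) ≤ u ∧ (q.1 : ℝ) ≤ u then (μ p.1 : ℝ) * Λ q.1 else 0)) := by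
    rw [← Finset.sum_add_distrib, ← Finset.sum_add_distrib, ← Finset.sum_sub_distrib]
    refine Finset.sum_congr rfl fun p hp => ?_
    rw [← Finset.sum_add_distrib, ← Finset.sum_add_distrib, ← Finset.sum_sub_distrib]
    exact Finset.sum_congr rfl fun q hq => pointwise p hp q hq
  rw [vtot n hn2, expand, aux0 u n hn]
  ring
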